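/- Equip ℓ∞ = ℓ∞(ℕ, ℂ) with the contractive c₀-module structure given by coordinatewise multiplication. Then ℓ∞ is extremely injective with respect to the class of all homogeneous contractive normed c₀-modules: for all homogeneous contractive normed c₀-modules X, Y, every isometric morphism i : X → Y and every morphism φ : X → ℓ∞, there exists a morphism ψ : Y → ℓ∞ with ψ ∘ i = φ and ‖ψ‖ = ‖φ‖. -/

import Mathlib

open Filter MeasureTheory

noncomputable section

/-- The algebra `c₀` of complex sequences converging to zero, with pointwise
operations and the supremum norm. -/
abbrev czero : Type := ZeroAtInftyContinuousMap ℕ ℂ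

/-- The `n`-th ort: the indicator sequence of `{n}`. -/
def ort (n : ℕ) : czero where
  toFun := fun m => if m = n then 1 else 0
  continuous_toFun := continuous_of_discreteTopology
  zero_at_infty' := by
    rw [cocompact_eq_atTop]
    have h : (fun m : ℕ => if m = n then (1 : ℂ) else 0) =ᶠ[atTop] fun _ => (0 : ℂ) := by
      filter_upwards [eventually_gt_atTop n] with m hm
      simp [Nat.ne_of_gt hm]
    exact (tendsto_congr' h).mpr tendsto_const_nhds

/-- `P N = p⁰ + ⋯ + p^{N-1}`. -/
def PN (N : ℕ) : czero := ∑ n ∈ Finset.range N, ort n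

/-- A (contractive) normed `c₀`-module structure on a complex normed space `X`. -/
structure C0Mod (X : Type) [NormedAddCommGroup X] [NormedSpace ℂ X] where
  smul : czero → X → X
  add_smul : ∀ a b x, smul (a + b) x = smul a x + smul b x
  smul_add : ∀ a x y, smul a (x + y) = smul a x + smul a y
  mul_smul : ∀ a b x, smul (a * b) x = smul a (smul b x)
  csmul_left : ∀ (c : ℂ) a x, smul (c • a) x = c • smul a x
  csmul_right : ∀ (c : ℂ) a x, smul a (c • x) = c • smul a x
  norm_smul_le : ∀ a x, ‖smul a x‖ ≤ ‖a‖ * ‖x‖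

namespace C0Mod

variable {X : Type} [NormedAddCommGroup X] [NormedSpace ℂ X] (M : C0Mod X)

/-- The action of `a ∈ c₀` as a continuous linear map. -/
def lsmul (a : czero) : X →L[ℂ] X :=
  LinearMap.mkContinuous
    { toFun := M.smul a
      map_add' := M.smul_add a
      map_smul' := fun c x => M.csmul_right c a x }
    ‖a‖ (fun x => M.norm_smul_le a x)

@[simp] lemma lsmul_apply (a : czero) (x : X) : M.lsmul a x = M.smul a x := rfl

/-- The essential part `X_es` of `X`: the closure of the linear span of all
products `a • x`. -/
def essSet : Set X :=
  closure (Submodule.span ℂ {y : X | ∃ (a : czero) (x : X), y = M.smul a x} : Set X)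

/-- A module is essential if it coincides with its essential part. -/
def Essential : Prop := M.essSet = Set.univ

/-- The `n`-th coordinate submodule `Xₙ = {pⁿ • x : x ∈ X}`. -/
def coordSub (n : ℕ) : Submodule ℂ X := LinearMap.range ((M.lsmul (ort n)) : X →ₗ[ℂ] X)

lemma mem_coordSub (n : ℕ) (x : X) : M.smul (ort n) x ∈ M.coordSub n := ⟨x, rfl⟩

/-- A module is homogeneous if the norm of an element is determined by the norms
of its coordinates. -/
def Homogeneous : Prop :=
  ∀ x y : X, (∀ n : ℕ, ‖M.smul (ort n) x‖ = ‖M.smul (ort n) y‖) → ‖x‖ = ‖y‖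

/-- The annihilator of `c₀` in `X`. -/
def ann : Submodule ℂ X where
  carrier := {x : X | ∀ a : czero, M.smul a x = 0}
  add_mem' := by
    intro x y hx hy
    intro a
    rw [M.smul_add, hx a, hy a, add_zero]
  zero_mem' := by
    intro a
    have h := M.smul_add a 0 0
    simp only [add_zero] at h
    have := congrArg (fun z => z - M.smul a 0) h
    simpa using this.symm
  smul_mem' := by
    intro c x hx a
    rw [M.csmul_right, hx a, smul_zero]

end C0Mod
open scoped ENNReal

lemma czero_apply_norm_le (a : czero) (n : ℕ) : ‖a n‖ ≤ ‖a‖ := by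
  rw [← ZeroAtInftyContinuousMap.norm_toBCF_eq_norm]
  exact a.toBCF.norm_coe_le_norm n

lemma memℓp_czero_mul {p : ℝ≥0∞} (hp : 1 ≤ p) (a : czero) (f : ℕ → ℂ)
    (hf : Memℓp f p) : Memℓp (fun n => a n * f n) p := by
  rcases p.trichotomy with rfl | rfl | hpt
  · exact absurd hp (by simp)
  · obtain ⟨C, hC⟩ := hf.bddAbove
    apply memℓp_infty
    refine ⟨‖a‖ * C, ?_⟩
    rintro r ⟨n, rfl⟩
    calc ‖a n * f n‖ = ‖a n‖ * ‖f n‖ := norm_mul _ _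
      _ ≤ ‖a‖ * C := by
          have h1 := czero_apply_norm_le a n
          have h2 : ‖f n‖ ≤ C := hC (Set.mem_range_self n)
          exact mul_le_mul h1 h2 (norm_nonneg _) (norm_nonneg _)
  · apply memℓp_gen
    have hsum : Summable (fun n => ‖a‖ ^ p.toReal * ‖f n‖ ^ p.toReal) :=
      (hf.summable hpt).mul_left _
    refine hsum.of_nonneg_of_le
      (fun n => Real.rpow_nonneg (norm_nonneg _) _) (fun n => ?_)
    calc ‖a n * f n‖ ^ p.toReal ≤ (‖a‖ * ‖f n‖) ^ p.toReal := by
          apply Real.rpow_le_rpow (norm_nonneg _) _ hpt.le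
          rw [norm_mul]
          exact mul_le_mul_of_nonneg_right (czero_apply_norm_le a n) (norm_nonneg _)
      _ = ‖a‖ ^ p.toReal * ‖f n‖ ^ p.toReal :=
          Real.mul_rpow (norm_nonneg _) (norm_nonneg _)

/-- The contractive normed `c₀`-module `ℓ^p(ℕ, ℂ)` (`1 ≤ p ≤ ∞`), with the
coordinatewise action of `c₀`. -/
def lpC0Mod (p : ℝ≥0∞) [hp : Fact (1 ≤ p)] : C0Mod (lp (fun _ : ℕ => ℂ) p) where
  smul a x := ⟨fun n => a n * x n, memℓp_czero_mul hp.out a x (lp.memℓp x)⟩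
  add_smul a b x := by
    apply lp.ext
    rw [lp.coeFn_add]
    funext n
    show ((a + b) n) * x n = a n * x n + b n * x n
    rw [ZeroAtInftyContinuousMap.coe_add, Pi.add_apply, add_mul]
  smul_add a x y := by
    apply lp.ext
    simp only [lp.coeFn_add]
    funext n
    show a n * ((x + y : lp _ p) n) = a n * x n + a n * y n
    rw [lp.coeFn_add, Pi.add_apply, mul_add]
  mul_smul a b x := by
    apply lp.ext
    funext n
    show ((a * b) n) * x n = a n * (b n * x n)
    rw [ZeroAtInftyContinuousMap.coe_mul, Pi.mul_apply, mul_assoc]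
  csmul_left c a x := by
    apply lp.ext
    rw [lp.coeFn_smul]
    funext n
    show ((c • a) n) * x n = c • (a n * x n)
    rw [ZeroAtInftyContinuousMap.coe_smul, Pi.smul_apply, smul_eq_mul, smul_eq_mul, mul_assoc]
  csmul_right c a x := by
    apply lp.ext
    simp only [lp.coeFn_smul]
    funext n
    show a n * ((c • x : lp _ p) n) = c • (a n * x n)
    rw [lp.coeFn_smul, Pi.smul_apply, smul_eq_mul, smul_eq_mul]
    ring
  norm_smul_le a x := by
    rcases p.trichotomy with rfl | rfl | hpt
    · exact absurd hp.out (by simp)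
    · apply lp.norm_le_of_forall_le (mul_nonneg (norm_nonneg a) (norm_nonneg x))
      intro n
      show ‖a n * x n‖ ≤ ‖a‖ * ‖x‖
      rw [norm_mul]
      exact mul_le_mul (czero_apply_norm_le a n)
        (lp.norm_apply_le_norm ENNReal.top_ne_zero x n) (norm_nonneg _) (norm_nonneg _)
    · apply lp.norm_le_of_tsum_le hpt (mul_nonneg (norm_nonneg a) (norm_nonneg x))
      have hx : Summable (fun n => ‖x n‖ ^ p.toReal) := (lp.memℓp x).summable hpt
      have hax : Summable (fun n => ‖a n * x n‖ ^ p.toReal) :=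
        (memℓp_czero_mul hp.out a x (lp.memℓp x)).summable hpt
      have hle : ∀ n : ℕ, ‖a n * x n‖ ^ p.toReal ≤ ‖a‖ ^ p.toReal * ‖x n‖ ^ p.toReal := by
        intro n
        calc ‖a n * x n‖ ^ p.toReal ≤ (‖a‖ * ‖x n‖) ^ p.toReal := by
              apply Real.rpow_le_rpow (norm_nonneg _) _ hpt.le
              rw [norm_mul]
              exact mul_le_mul_of_nonneg_right (czero_apply_norm_le a n) (norm_nonneg _)
          _ = ‖a‖ ^ p.toReal * ‖x n‖ ^ p.toReal :=
              Real.mul_rpow (norm_nonneg _) (norm_nonneg _)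
      calc (∑' n : ℕ, ‖a n * x n‖ ^ p.toReal)
          ≤ ∑' n : ℕ, ‖a‖ ^ p.toReal * ‖x n‖ ^ p.toReal :=
            Summable.tsum_le_tsum hle hax (hx.mul_left _)
        _ = ‖a‖ ^ p.toReal * ∑' n : ℕ, ‖x n‖ ^ p.toReal := tsum_mul_left
        _ = ‖a‖ ^ p.toReal * ‖x‖ ^ p.toReal := by rw [← lp.norm_rpow_eq_tsum hpt]
        _ = (‖a‖ * ‖x‖) ^ p.toReal := (Real.mul_rpow (norm_nonneg _) (norm_nonneg _)).symm
lemma ort_apply_self (n : ℕ) : ort n n = 1 := by simp [ort]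

lemma norm_ort_le (n : ℕ) : ‖ort n‖ ≤ 1 := by
  rw [← ZeroAtInftyContinuousMap.norm_toBCF_eq_norm]
  refine BoundedContinuousFunction.norm_le zero_le_one |>.2 (fun m => ?_)
  show ‖ort n m‖ ≤ 1
  show ‖if m = n then (1:ℂ) else 0‖ ≤ 1
  split <;> simp

lemma ort_mul (n : ℕ) (a : czero) : ort n * a = a n • ort n := by
  ext m
  show ort n m * a m = a n • ort n m
  show (if m = n then (1:ℂ) else 0) * a m = a n * (if m = n then (1:ℂ) else 0)
  by_cases h : m = n
  · subst h; simp
  · simp [h]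

lemma C0Mod_smul_sub {X : Type} [NormedAddCommGroup X] [NormedSpace ℂ X]
    (M : C0Mod X) (a : czero) (x y : X) :
    M.smul a (x - y) = M.smul a x - M.smul a y := by
  have h1 : x - y = x + (-1 : ℂ) • y := by module
  rw [h1, M.smul_add, M.csmul_right]
  module


lemma hb_factor {X Y : Type} [NormedAddCommGroup X] [NormedSpace ℂ X]
    [NormedAddCommGroup Y] [NormedSpace ℂ Y]
    (T : X →L[ℂ] Y) (F : X →ₗ[ℂ] ℂ) (C : ℝ) (hC : 0 ≤ C)
    (hbd : ∀ x : X, ‖F x‖ ≤ C * ‖T x‖) :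
    ∃ G : Y →L[ℂ] ℂ, (∀ x : X, G (T x) = F x) ∧ ∀ y : Y, ‖G y‖ ≤ C * ‖y‖ := by
  set T' : X →ₗ[ℂ] Y := (T : X →ₗ[ℂ] Y) with hT'
  have hker : LinearMap.ker T' ≤ LinearMap.ker F := by
    intro x hx
    rw [LinearMap.mem_ker] at hx ⊢
    refine norm_eq_zero.mp (le_antisymm ?_ (norm_nonneg _))
    calc ‖F x‖ ≤ C * ‖T x‖ := hbd x
      _ = 0 := by
          have : T x = 0 := hx
          rw [this, norm_zero, mul_zero]
  let g0 : LinearMap.range T' →ₗ[ℂ] ℂ :=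
    ((LinearMap.ker T').liftQ F hker).comp (T'.quotKerEquivRange.symm : _ →ₗ[ℂ] _)
  have hg0 : ∀ x : X, g0 ⟨T' x, LinearMap.mem_range_self T' x⟩ = F x := by
    intro x
    show ((LinearMap.ker T').liftQ F hker) (T'.quotKerEquivRange.symm ⟨T' x, _⟩) = F x
    rw [LinearMap.quotKerEquivRange_symm_apply_image]
    simp [Submodule.mkQ_apply]
  have hg0bd : ∀ z : LinearMap.range T', ‖g0 z‖ ≤ C * ‖z‖ := by
    intro z
    obtain ⟨x, hx⟩ := z.2
    have hz : z = ⟨T' x, LinearMap.mem_range_self T' x⟩ := by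
      ext; exact hx.symm
    rw [hz, hg0 x]
    calc ‖F x‖ ≤ C * ‖T x‖ := hbd x
      _ = C * ‖(⟨T' x, LinearMap.mem_range_self T' x⟩ : LinearMap.range T')‖ := rfl
  let g : LinearMap.range T' →L[ℂ] ℂ := LinearMap.mkContinuous g0 C hg0bd
  obtain ⟨G, hGext, hGnorm⟩ := exists_extension_norm_eq (LinearMap.range T') g
  refine ⟨G, ?_, ?_⟩
  · intro x
    calc G (T x) = g ⟨T' x, LinearMap.mem_range_self T' x⟩ :=
          hGext ⟨T' x, LinearMap.mem_range_self T' x⟩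
      _ = F x := hg0 x
  · intro y
    calc ‖G y‖ ≤ ‖G‖ * ‖y‖ := G.le_opNorm y
      _ ≤ C * ‖y‖ := by
          refine mul_le_mul_of_nonneg_right ?_ (norm_nonneg y)
          rw [hGnorm]
          exact LinearMap.mkContinuous_norm_le _ hC _

set_option maxHeartbeats 1000000 in
/-- The `c₀`-module `ℓ∞ = ℓ∞(ℕ, ℂ)` (with the coordinatewise
action) is extremely injective with respect to the class of all homogeneous
contractive normed `c₀`-modules. -/
theorem linfty_extremely_injective :
    ∀ (X Y : Type) [NormedAddCommGroup X] [NormedSpace ℂ X]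
      [NormedAddCommGroup Y] [NormedSpace ℂ Y]
      (Mx : C0Mod X) (My : C0Mod Y),
      Mx.Homogeneous → My.Homogeneous →
      ∀ (i : X →L[ℂ] Y),
        (∀ (a : czero) (x : X), i (Mx.smul a x) = My.smul a (i x)) →
        (∀ x : X, ‖i x‖ = ‖x‖) →
        ∀ (φ : X →L[ℂ] lp (fun _ : ℕ => ℂ) ∞),
          (∀ (a : czero) (x : X), φ (Mx.smul a x) = (lpC0Mod ∞).smul a (φ x)) →
          ∃ ψ : Y →L[ℂ] lp (fun _ : ℕ => ℂ) ∞,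
            (∀ (a : czero) (y : Y), ψ (My.smul a y) = (lpC0Mod ∞).smul a (ψ y)) ∧
            (∀ x : X, ψ (i x) = φ x) ∧ ‖ψ‖ = ‖φ‖ := by
  intro X Y _ _ _ _ Mx My _ _ i hicomm hiiso φ hφcomm
  have key : ∀ n : ℕ, ∃ h : Y →L[ℂ] ℂ,
      (∀ x : X, h (i x) = (φ x) n) ∧ (∀ y : Y, ‖h y‖ ≤ ‖φ‖ * ‖My.smul (ort n) y‖) := by
    intro n
    have hcoord : ∀ x : X, (φ (Mx.smul (ort n) x)) n = (φ x) n := by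
      intro x
      rw [hφcomm]
      show ort n n * (φ x) n = (φ x) n
      rw [ort_apply_self, one_mul]
    let F : X →ₗ[ℂ] ℂ :=
      { toFun := fun x => (φ x) n
        map_add' := by
          intro u v
          show (φ (u + v)) n = (φ u) n + (φ v) n
          rw [map_add]
          exact congrFun (lp.coeFn_add (φ u) (φ v)) n
        map_smul' := by
          intro c u
          show (φ (c • u)) n = c * (φ u) n
          rw [_root_.map_smul]
          simpa using congrFun (lp.coeFn_smul c (φ u)) n }
    have hbd : ∀ x : X, ‖F x‖ ≤ ‖φ‖ * ‖((My.lsmul (ort n)).comp i) x‖ := by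
      intro x
      show ‖(φ x) n‖ ≤ _
      rw [← hcoord x]
      calc ‖(φ (Mx.smul (ort n) x)) n‖ ≤ ‖φ (Mx.smul (ort n) x)‖ :=
            lp.norm_apply_le_norm ENNReal.top_ne_zero _ n
        _ ≤ ‖φ‖ * ‖Mx.smul (ort n) x‖ := φ.le_opNorm _
        _ = ‖φ‖ * ‖((My.lsmul (ort n)).comp i) x‖ := by
            rw [← hiiso (Mx.smul (ort n) x), hicomm]
            rfl
    obtain ⟨G, hGfac, hGbd⟩ :=
      hb_factor ((My.lsmul (ort n)).comp i) F ‖φ‖ (norm_nonneg φ) hbd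
    refine ⟨G.comp (My.lsmul (ort n)), ?_, ?_⟩
    · intro x
      show G (My.smul (ort n) (i x)) = (φ x) n
      exact hGfac x
    · intro y
      show ‖G (My.smul (ort n) y)‖ ≤ _
      exact hGbd _
  choose h hext hbound using key
  have hb2 : ∀ (y : Y) (n : ℕ), ‖h n y‖ ≤ ‖φ‖ * ‖y‖ := by
    intro y n
    calc ‖h n y‖ ≤ ‖φ‖ * ‖My.smul (ort n) y‖ := hbound n y
      _ ≤ ‖φ‖ * (1 * ‖y‖) := by
          refine mul_le_mul_of_nonneg_left ?_ (norm_nonneg φ)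
          calc ‖My.smul (ort n) y‖ ≤ ‖ort n‖ * ‖y‖ := My.norm_smul_le _ _
            _ ≤ 1 * ‖y‖ := mul_le_mul_of_nonneg_right (norm_ort_le n) (norm_nonneg y)
      _ = ‖φ‖ * ‖y‖ := by ring
  let ψ0 : Y →ₗ[ℂ] lp (fun _ : ℕ => ℂ) ∞ :=
    { toFun := fun y =>
        ⟨fun n => h n y, memℓp_infty ⟨‖φ‖ * ‖y‖, by rintro r ⟨n, rfl⟩; exact hb2 y n⟩⟩
      map_add' := by
        intro y z
        apply lp.ext
        rw [lp.coeFn_add]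
        funext n
        show h n (y + z) = h n y + h n z
        exact map_add (h n) y z
      map_smul' := by
        intro c y
        apply lp.ext
        rw [lp.coeFn_smul]
        funext n
        show h n (c • y) = c • h n y
        exact _root_.map_smul (h n) c y }
  let ψ : Y →L[ℂ] lp (fun _ : ℕ => ℂ) ∞ := LinearMap.mkContinuous ψ0 ‖φ‖
    (fun y => lp.norm_le_of_forall_le (mul_nonneg (norm_nonneg φ) (norm_nonneg y))
      (fun n => hb2 y n))
  have hψ_apply : ∀ (y : Y) (n : ℕ), (ψ y) n = h n y := fun y n => rfl
  have hψi : ∀ x : X, ψ (i x) = φ x := by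
    intro x
    apply lp.ext
    funext n
    rw [hψ_apply]
    exact hext n x
  refine ⟨ψ, ?_, hψi, ?_⟩
  · intro a y
    apply lp.ext
    funext n
    have hrhs : ((lpC0Mod ∞).smul a (ψ y)) n = a n * h n y := by
      show a n * (ψ y) n = a n * h n y
      rw [hψ_apply]
    rw [hψ_apply, hrhs]
    have hz : My.smul (ort n) (My.smul a y - (a n) • y) = 0 := by
      rw [C0Mod_smul_sub, ← My.mul_smul, ort_mul, My.csmul_left, My.csmul_right, sub_self]
    have h1 : h n (My.smul a y) - a n * h n y = h n (My.smul a y - (a n) • y) := by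
      rw [map_sub, _root_.map_smul, smul_eq_mul]
    have h2 : ‖h n (My.smul a y) - a n * h n y‖ ≤ 0 := by
      rw [h1]
      calc ‖h n (My.smul a y - (a n) • y)‖
          ≤ ‖φ‖ * ‖My.smul (ort n) (My.smul a y - (a n) • y)‖ := hbound n _
        _ = 0 := by rw [hz, norm_zero, mul_zero]
    have h3 : ‖h n (My.smul a y) - a n * h n y‖ = 0 :=
      le_antisymm h2 (norm_nonneg _)
    exact sub_eq_zero.mp (norm_eq_zero.mp h3)
  · refine le_antisymm (LinearMap.mkContinuous_norm_le _ (norm_nonneg φ) _) ?_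
    refine ContinuousLinearMap.opNorm_le_bound _ (norm_nonneg ψ) ?_
    intro x
    calc ‖φ x‖ = ‖ψ (i x)‖ := by rw [hψi]
      _ ≤ ‖ψ‖ * ‖i x‖ := ψ.le_opNorm _
      _ = ‖ψ‖ * ‖x‖ := by rw [hiiso]
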